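/- Assume k has characteristic zero. Let σ̂ denote the automorphism of the fraction field Frac(B) induced by σ. If c ∈ Frac(B) is nonzero and σ̂(c) = 2^m · c for some natural number m, then m = 0 and c lies in the image of k in Frac(B). -/

import Mathlib

/-- The group automorphism of `ℤ × ℤ` sending `(m, n)` to `(5m + n, 4m + n)`. -/
noncomputable def Mzz : (ℤ × ℤ) ≃+ (ℤ × ℤ) where
  toFun v := (5 * v.1 + v.2, 4 * v.1 + v.2)
  invFun v := (v.1 - v.2, -4 * v.1 + 5 * v.2)
  left_inv := by rintro ⟨m, n⟩; simp only [Prod.mk.injEq]; constructor <;> ring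
  right_inv := by rintro ⟨m, n⟩; simp only [Prod.mk.injEq]; constructor <;> ring
  map_add' := by
    rintro ⟨m, n⟩ ⟨m', n'⟩
    simp only [Prod.mk_add_mk, Prod.mk.injEq]
    constructor <;> ring

noncomputable def Dr : ℤ × ℤ → ℝ := fun v => (2 + 2 * Real.sqrt 2) * v.1 + v.2

lemma sqrt2_sq : Real.sqrt 2 * Real.sqrt 2 = 2 := Real.mul_self_sqrt (by norm_num)

lemma Dr_add (v w : ℤ × ℤ) : Dr (v + w) = Dr v + Dr w := by
  simp only [Dr, Prod.fst_add, Prod.snd_add]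
  push_cast; ring

lemma Dr_inj : Function.Injective Dr := by
  rintro ⟨a, b⟩ ⟨c, d⟩ h
  simp only [Dr] at h
  by_cases hac : a = c
  · subst hac
    have : (b : ℝ) = d := by linarith
    exact_mod_cast congrArg (Prod.mk a) (show b = d by exact_mod_cast this)
  · exfalso
    have hne : ((a : ℝ) - c) ≠ 0 := by
      intro h0; exact hac (by exact_mod_cast sub_eq_zero.mp h0)
    have hs : Real.sqrt 2 = ((d - b) - 2 * (a - c)) / (2 * (a - c)) := by
      field_simp
      push_cast
      nlinarith [h]
    have : Irrational (Real.sqrt 2) := irrational_sqrt_two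
    apply this.ne_rat (((d - b) - 2 * (a - c)) / (2 * (a - c)) : ℚ)
    rw [hs]; push_cast; ring

lemma Dr_M (v : ℤ × ℤ) : Dr (Mzz v) = (3 + 2 * Real.sqrt 2) * Dr v := by
  have : (Mzz v) = (5 * v.1 + v.2, 4 * v.1 + v.2) := rfl
  rw [this]
  simp only [Dr]
  push_cast
  have h2 := sqrt2_sq
  linear_combination (-4 * (v.1:ℝ)) * h2

lemma lam_gt_one : (1 : ℝ) < 3 + 2 * Real.sqrt 2 := by
  nlinarith [Real.sqrt_nonneg 2]

lemma mul_apply_max {k : Type*} [Field k] (p q : AddMonoidAlgebra k (ℤ × ℤ)) {a b : ℤ × ℤ}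
    (ha : ∀ s ∈ p.coeff.support, Dr s ≤ Dr a) (hb : ∀ t ∈ q.coeff.support, Dr t ≤ Dr b) :
    (p * q).coeff (a + b) = p.coeff a * q.coeff b := by
  classical
  simp_rw [AddMonoidAlgebra.coeff_mul, Finsupp.sum]
  rw [Finset.sum_eq_single a, Finset.sum_eq_single b, if_pos rfl]
  · intro t ht hne
    refine if_neg fun he => ?_
    have hDr : Dr a + Dr t = Dr a + Dr b := by rw [← Dr_add, ← Dr_add, he]
    have h1 : Dr t < Dr b := lt_of_le_of_ne (hb t ht) fun h => hne (Dr_inj h)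
    linarith
  · intro h; rw [if_pos rfl, Finsupp.notMem_support_iff.1 h, mul_zero]
  · intro s hs hne
    refine Finset.sum_eq_zero fun t ht => if_neg fun he => ?_
    have hDr : Dr s + Dr t = Dr a + Dr b := by rw [← Dr_add, ← Dr_add, he]
    have h1 : Dr s < Dr a := lt_of_le_of_ne (ha s hs) fun h => hne (Dr_inj h)
    have h2 : Dr t ≤ Dr b := hb t ht
    linarith
  · intro h
    refine Finset.sum_eq_zero fun t _ => ?_
    rw [Finsupp.notMem_support_iff.1 h, zero_mul, ite_self]

lemma support_mul_le {k : Type*} [Field k] (p q : AddMonoidAlgebra k (ℤ × ℤ)) {a b : ℤ × ℤ}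
    (ha : ∀ s ∈ p.coeff.support, Dr s ≤ Dr a) (hb : ∀ t ∈ q.coeff.support, Dr t ≤ Dr b) :
    ∀ s ∈ (p * q).coeff.support, Dr s ≤ Dr (a + b) := by
  classical
  intro s hs
  obtain ⟨u, hu, v, hv, rfl⟩ := Finset.mem_add.mp (AddMonoidAlgebra.support_coeff_mul_subset p q hs)
  rw [Dr_add, Dr_add]
  exact add_le_add (ha u hu) (hb v hv)


/-- The `k`-algebra automorphism `σ` of `B = k[x^{±1}, y^{±1}]` with
`σ(x) = x^5 y^4`, `σ(y) = x y`, induced by `Mzz`. -/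
noncomputable def σB (k : Type*) [Field k] :
    AddMonoidAlgebra k (ℤ × ℤ) ≃ₐ[k] AddMonoidAlgebra k (ℤ × ℤ) :=
  AddMonoidAlgebra.domCongr k k Mzz

instance (k : Type*) [Field k] : IsDomain (AddMonoidAlgebra k (ℤ × ℤ)) :=
  NoZeroDivisors.to_isDomain _

lemma σB_apply_M {k : Type*} [Field k] (p : AddMonoidAlgebra k (ℤ × ℤ)) (v : ℤ × ℤ) :
    (σB k p).coeff (Mzz v) = p.coeff v := by
  simp [σB]

lemma σB_support_max {k : Type*} [Field k] (p : AddMonoidAlgebra k (ℤ × ℤ)) {a : ℤ × ℤ}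
    (ha : ∀ s ∈ p.coeff.support, Dr s ≤ Dr a) :
    ∀ s ∈ (σB k p).coeff.support, Dr s ≤ Dr (Mzz a) := by
  intro s hs
  rw [show σB k p = AddMonoidAlgebra.domCongr k k Mzz p from rfl,
    AddMonoidAlgebra.domCongr_support] at hs
  obtain ⟨u, hu, rfl⟩ := Finset.mem_map.mp hs
  show Dr (Mzz u) ≤ Dr (Mzz a)
  rw [Dr_M, Dr_M]
  have := ha u hu
  nlinarith [lam_gt_one]

lemma key1 {k : Type*} [Field k] [CharZero k] (p q : AddMonoidAlgebra k (ℤ × ℤ))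
    (hp : p ≠ 0) (hq : q ≠ 0) (m : ℕ)
    (heq : σB k p * q = 2 ^ m * (p * σB k q)) :
    ∃ a : ℤ × ℤ, a ∈ p.coeff.support ∧ a ∈ q.coeff.support ∧
      (∀ s ∈ p.coeff.support, Dr s ≤ Dr a) ∧ (∀ t ∈ q.coeff.support, Dr t ≤ Dr a) ∧ (2 : k) ^ m = 1 := by
  classical
  obtain ⟨a, ha, hamax⟩ := p.coeff.support.exists_max_image Dr (Finsupp.support_nonempty_iff.2 (AddMonoidAlgebra.coeff_eq_zero.not.2 hp))
  obtain ⟨b, hb, hbmax⟩ := q.coeff.support.exists_max_image Dr (Finsupp.support_nonempty_iff.2 (AddMonoidAlgebra.coeff_eq_zero.not.2 hq))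
  have hpa : p.coeff a ≠ 0 := Finsupp.mem_support_iff.1 ha
  have hqb : q.coeff b ≠ 0 := Finsupp.mem_support_iff.1 hb
  have h2m : ((2 : k) ^ m) ≠ 0 := pow_ne_zero _ two_ne_zero
  have h2 : (2 : AddMonoidAlgebra k (ℤ × ℤ)) ^ m * (p * σB k q)
      = ((2 : k) ^ m) • (p * σB k q) := by
    rw [Algebra.smul_def, map_pow, map_ofNat]
  have hco : ∀ x, (σB k p * q).coeff x = (2 : k) ^ m * ((p * σB k q).coeff x) := by
    intro x
    rw [heq, h2, AddMonoidAlgebra.coeff_smul_apply, smul_eq_mul]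
  -- tops of σB p and σB q
  have hσp := σB_support_max p hamax
  have hσq := σB_support_max q hbmax
  -- coefficient computations
  have cL : (σB k p * q).coeff (Mzz a + b) = p.coeff a * q.coeff b := by
    rw [mul_apply_max _ _ hσp hbmax, σB_apply_M]
  have cR : (p * σB k q).coeff (a + Mzz b) = p.coeff a * q.coeff b := by
    rw [mul_apply_max _ _ hamax hσq, σB_apply_M]
  -- memberships
  have m1 : Mzz a + b ∈ (p * σB k q).coeff.support := by
    rw [Finsupp.mem_support_iff]
    intro h0
    rw [hco (Mzz a + b), h0, mul_zero] at cL
    exact mul_ne_zero hpa hqb cL.symm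
  have m2 : a + Mzz b ∈ (σB k p * q).coeff.support := by
    rw [Finsupp.mem_support_iff, hco (a + Mzz b), cR]
    exact mul_ne_zero h2m (mul_ne_zero hpa hqb)
  have d1 : Dr (Mzz a + b) ≤ Dr (a + Mzz b) := support_mul_le p (σB k q) hamax hσq _ m1
  have d2 : Dr (a + Mzz b) ≤ Dr (Mzz a + b) := support_mul_le (σB k p) q hσp hbmax _ m2
  have deq : Dr (Mzz a + b) = Dr (a + Mzz b) := le_antisymm d1 d2
  rw [Dr_add, Dr_add, Dr_M, Dr_M] at deq
  have hab : a = b := by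
    apply Dr_inj
    nlinarith [lam_gt_one]
  subst hab
  refine ⟨a, ha, hb, hamax, hbmax, ?_⟩
  have : Mzz a + a = a + Mzz a := add_comm _ _
  have hfin := hco (Mzz a + a)
  rw [cL, this, cR] at hfin
  field_simp at hfin
  exact hfin.symm

lemma key2 {k : Type*} [Field k] [CharZero k] (p q : AddMonoidAlgebra k (ℤ × ℤ))
    (hp : p ≠ 0) (hq : q ≠ 0) (m : ℕ)
    (heq : σB k p * q = 2 ^ m * (p * σB k q)) :
    m = 0 ∧ ∃ r : k, p = algebraMap k (AddMonoidAlgebra k (ℤ × ℤ)) r * q := by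
  classical
  obtain ⟨a, ha, hb, hamax, hbmax, h21⟩ := key1 p q hp hq m heq
  have hqa : q.coeff a ≠ 0 := Finsupp.mem_support_iff.1 hb
  have hm0 : m = 0 := by
    have h1 : ((2 ^ m : ℕ) : k) = ((1 : ℕ) : k) := by push_cast; exact h21
    have h2 : (2 : ℕ) ^ m = 1 := Nat.cast_injective h1
    by_contra hm
    have h3 := Nat.one_lt_two_pow_iff.mpr hm
    rw [h2] at h3
    exact lt_irrefl _ h3
  subst hm0
  rw [pow_zero, one_mul] at heq
  refine ⟨rfl, p.coeff a * (q.coeff a)⁻¹, ?_⟩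
  set r : k := p.coeff a * (q.coeff a)⁻¹ with hr
  set p' : AddMonoidAlgebra k (ℤ × ℤ) := p - algebraMap k _ r * q with hp'
  rcases eq_or_ne p' 0 with h0 | h0
  · have := sub_eq_zero.mp h0
    exact this
  · exfalso
    have hσ' : σB k p' = σB k p - algebraMap k _ r * σB k q := by
      rw [hp', map_sub, map_mul, AlgEquiv.commutes]
    have heq' : σB k p' * q = 2 ^ 0 * (p' * σB k q) := by
      rw [pow_zero, one_mul, hσ', hp']
      ring_nf
      linear_combination heq
    obtain ⟨a', ha', hb', hamax', hbmax', -⟩ := key1 p' q h0 hq 0 heq'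
    have haa : a' = a := by
      apply Dr_inj
      exact le_antisymm (hbmax a' hb') (hbmax' a hb)
    rw [haa] at ha'
    have : p'.coeff a = 0 := by
      have e : algebraMap k (AddMonoidAlgebra k (ℤ × ℤ)) r
          = AddMonoidAlgebra.single (0 : ℤ × ℤ) r := by
        simp [AddMonoidAlgebra.coe_algebraMap]
      rw [hp', AddMonoidAlgebra.coeff_sub, Finsupp.sub_apply, e, AddMonoidAlgebra.coeff_single_zero_mul, hr]
      field_simp
      rw [sub_self, mul_zero]
    exact Finsupp.mem_support_iff.1 ha' this


/-- If `k` has characteristic zero, `σ̂` is the automorphism of `Frac(B)` induced by `σ`,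
`c ∈ Frac(B)` is nonzero and `σ̂(c) = 2^m · c` for some natural number `m`, then `m = 0`
and `c` lies in the image of `k` in `Frac(B)`. -/
theorem stmt4 (k : Type*) [Field k] [CharZero k]
    (σhat : FractionRing (AddMonoidAlgebra k (ℤ × ℤ)) ≃+*
      FractionRing (AddMonoidAlgebra k (ℤ × ℤ)))
    (hcomp : ∀ b : AddMonoidAlgebra k (ℤ × ℤ),
      σhat (algebraMap (AddMonoidAlgebra k (ℤ × ℤ)) (FractionRing (AddMonoidAlgebra k (ℤ × ℤ))) b)
        = algebraMap (AddMonoidAlgebra k (ℤ × ℤ)) (FractionRing (AddMonoidAlgebra k (ℤ × ℤ)))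
          (σB k b))
    (c : FractionRing (AddMonoidAlgebra k (ℤ × ℤ))) (hc : c ≠ 0) (m : ℕ)
    (h : σhat c = 2 ^ m * c) :
    m = 0 ∧ ∃ a : k,
      c = algebraMap (AddMonoidAlgebra k (ℤ × ℤ)) (FractionRing (AddMonoidAlgebra k (ℤ × ℤ)))
        (algebraMap k (AddMonoidAlgebra k (ℤ × ℤ)) a) := by
  classical
  obtain ⟨⟨p, q⟩, hpq⟩ :=
    IsLocalization.surj (nonZeroDivisors (AddMonoidAlgebra k (ℤ × ℤ))) c
  simp only at hpq
  have hq0 : (q : AddMonoidAlgebra k (ℤ × ℤ)) ≠ 0 := nonZeroDivisors.ne_zero q.2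
  have hinj := IsFractionRing.injective (AddMonoidAlgebra k (ℤ × ℤ))
    (FractionRing (AddMonoidAlgebra k (ℤ × ℤ)))
  have halgq : algebraMap (AddMonoidAlgebra k (ℤ × ℤ))
      (FractionRing (AddMonoidAlgebra k (ℤ × ℤ))) (q : AddMonoidAlgebra k (ℤ × ℤ)) ≠ 0 := by
    intro h0
    exact hq0 (hinj (by rw [h0, map_zero]))
  have hp0 : p ≠ 0 := by
    intro h0
    rw [h0, map_zero] at hpq
    exact hc ((mul_eq_zero.mp hpq).resolve_right halgq)
  have hBeq : σB k p * (q : AddMonoidAlgebra k (ℤ × ℤ))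
      = 2 ^ m * (p * σB k (q : AddMonoidAlgebra k (ℤ × ℤ))) := by
    apply hinj
    rw [map_mul, map_mul, map_mul, map_pow, map_ofNat, ← hcomp, ← hcomp, ← hpq, map_mul, h]
    ring
  obtain ⟨hm0, r, hpr⟩ := key2 p q hp0 hq0 m hBeq
  refine ⟨hm0, r, ?_⟩
  apply mul_right_cancel₀ halgq
  rw [hpq, hpr, map_mul]
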